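/- arXiv:2004.04479 — 7 statements merged into one kernel-verified Lean document; each statement's English description precedes it below -/
import Mathlib

section
/- (Existence of adversarial examples, Theorem 1) Let F : B_n → R be a classification map and let (x, l) be drawn from a probability distribution on B_n × L with conditional density p_A = p(·| l = A) for some label A. Assume: (A1) a set C_A is contained in B_n(r_A, x_A) with 0 < r_A < 1; (A2) F(x) = A for all x ∈ C_A, and there is Δ > 0 such that every point x on the sphere S_{n-1}(r_A, x_A) has a point y(x) with F(y(x)) ≠ A and ‖y(x) − x‖ ≤ Δ; (A3) p_A(x) ≤ C/(V_n(B_n) r_A^n) on B_n(r_A, x_A) and ∫_{C_A} p_A ≥ ν > 0. Then for any ε ∈ (0, r_A), the probability that x admits an (ε+Δ)-adversarial example is at least P(A) · max{ν − C(1 − ε/r_A)^n, 0}. -/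
open MeasureTheory Metric

/-- Theorem 1 (existence of adversarial examples). Under assumptions A1–A3, for any
`ε ∈ (0, r_A)`, the probability that a sample `(x, l)` admits an `(ε+Δ)`-adversarial example
is at least `P(A) · max {ν − C (1 − ε/r_A)^n, 0}`. -/
theorem stmt_4 (n : ℕ) (hn : 1 ≤ n)
    (L : Type*) [MeasurableSpace L] (A : L)
    (F : EuclideanSpace ℝ (Fin n) → L)
    (μ : Measure (EuclideanSpace ℝ (Fin n) × L)) [IsProbabilityMeasure μ]
    (pA : EuclideanSpace ℝ (Fin n) → ℝ) (PA : ℝ)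
    (xA : EuclideanSpace ℝ (Fin n)) (CA : Set (EuclideanSpace ℝ (Fin n)))
    (C rA ν Δ ε : ℝ)
    -- the marginal probability of label `A` and the conditional density of `x` given `l = A`
    (hPA : PA = (μ ((Set.univ : Set (EuclideanSpace ℝ (Fin n))) ×ˢ {A})).toReal)
    (hpAmeas : Measurable pA) (hpApos : ∀ x, 0 ≤ pA x) (hpAint : Integrable pA)
    (hpAprob : ∫ x, pA x = 1)
    (hdens : ∀ S : Set (EuclideanSpace ℝ (Fin n)), MeasurableSet S →
      μ (S ×ˢ {A}) = ENNReal.ofReal (PA * ∫ x in S, pA x))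
    -- A1
    (hxA : xA ∈ closedBall (0 : EuclideanSpace ℝ (Fin n)) 1)
    (hrA0 : 0 < rA) (hrA1 : rA < 1) (hCAsub : CA ⊆ closedBall xA rA)
    (hCAmeas : MeasurableSet CA)
    -- A2
    (hclass : ∀ x ∈ CA, F x = A) (hΔ : 0 < Δ)
    (hboundary : ∀ x ∈ sphere xA rA,
      ∃ y ∈ closedBall (0 : EuclideanSpace ℝ (Fin n)) 1, F y ≠ A ∧ ‖y - x‖ ≤ Δ)
    -- A3
    (hC : 0 < C) (hν0 : 0 < ν) (hν1 : ν ≤ 1)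
    (hbound : ∀ x ∈ closedBall xA rA,
      pA x ≤ C / ((volume (closedBall (0 : EuclideanSpace ℝ (Fin n)) 1)).toReal * rA ^ n))
    (hmass : ν ≤ ∫ x in CA, pA x)
    (hε : 0 < ε) (hεr : ε < rA) :
    ENNReal.ofReal (PA * max (ν - C * (1 - ε / rA) ^ n) 0)
      ≤ μ {q : EuclideanSpace ℝ (Fin n) × L |
            ∃ y ∈ closedBall (0 : EuclideanSpace ℝ (Fin n)) 1,
              F y ≠ F q.1 ∧ ‖q.1 - y‖ ≤ ε + Δ} := by
  have hrAε : 0 < rA - ε := by linarith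
  set V := volume (closedBall (0 : EuclideanSpace ℝ (Fin n)) 1) with hVdef
  have hVfin : V ≠ ⊤ := measure_closedBall_lt_top.ne
  have hVpos : 0 < V.toReal := by
    refine ENNReal.toReal_pos (ne_of_gt ?_) hVfin
    exact measure_closedBall_pos volume (0 : EuclideanSpace ℝ (Fin n)) one_pos
  set S : Set (EuclideanSpace ℝ (Fin n)) := CA ∩ {x | rA - ε ≤ dist x xA} with hSdef
  have hSmeas : MeasurableSet S :=
    hCAmeas.inter ((isClosed_le continuous_const
      (continuous_id.dist continuous_const)).measurableSet)
  -- every point of S admits an (ε+Δ)-adversarial example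
  have hadv : ∀ x ∈ S, ∃ y ∈ closedBall (0 : EuclideanSpace ℝ (Fin n)) 1,
      F y ≠ F x ∧ ‖x - y‖ ≤ ε + Δ := by
    intro x hx
    obtain ⟨hxCA, hxd⟩ := hx
    have ht1 : dist x xA ≤ rA := mem_closedBall.mp (hCAsub hxCA)
    have ht0 : 0 < dist x xA := lt_of_lt_of_le hrAε hxd
    set t := dist x xA with htdef
    have htn : ‖x - xA‖ = t := by rw [htdef, dist_eq_norm]
    set z : EuclideanSpace ℝ (Fin n) := xA + (rA / t) • (x - xA) with hzdef
    have hzs : z ∈ sphere xA rA := by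
      have hz1 : z - xA = (rA / t) • (x - xA) := by rw [hzdef]; abel
      have : dist z xA = rA := by
        rw [dist_eq_norm, hz1, norm_smul, Real.norm_eq_abs,
          abs_of_pos (div_pos hrA0 ht0), htn]
        field_simp
      exact mem_sphere.mpr this
    have hxz : ‖x - z‖ ≤ ε := by
      have hxzeq : x - z = (1 - rA / t) • (x - xA) := by
        rw [hzdef, sub_smul, one_smul]; abel
      have hxd' : rA - ε ≤ t := hxd
      have hge : 1 ≤ rA / t := (one_le_div ht0).mpr ht1
      rw [hxzeq, norm_smul, Real.norm_eq_abs, abs_of_nonpos (by linarith), htn]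
      have : -(1 - rA / t) * t = rA - t := by field_simp; ring
      rw [this]; linarith
    obtain ⟨y, hy1, hy2, hy3⟩ := hboundary z hzs
    refine ⟨y, hy1, ?_, ?_⟩
    · rw [hclass x hxCA]; exact hy2
    · calc ‖x - y‖ ≤ ‖x - z‖ + ‖z - y‖ := norm_sub_le_norm_sub_add_norm_sub x z y
        _ ≤ ε + Δ := by rw [norm_sub_rev z y]; linarith
  -- mass of the inner part is small
  set T : Set (EuclideanSpace ℝ (Fin n)) := CA ∩ {x | dist x xA < rA - ε} with hTdef
  have hTmeas : MeasurableSet T :=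
    hCAmeas.inter ((isOpen_lt (continuous_id.dist continuous_const)
      continuous_const).measurableSet)
  have hST : Disjoint S T := by
    refine Set.disjoint_left.mpr ?_
    rintro x ⟨-, hx1⟩ ⟨-, hx2⟩
    simp only [Set.mem_setOf_eq] at hx1 hx2
    linarith
  have hunion : S ∪ T = CA := by
    ext x
    constructor
    · rintro (⟨h, -⟩ | ⟨h, -⟩) <;> exact h
    · intro h
      rcases le_or_gt (rA - ε) (dist x xA) with hle | hlt
      · exact Or.inl ⟨h, hle⟩
      · exact Or.inr ⟨h, hlt⟩
  have hsplit : ∫ x in CA, pA x = (∫ x in S, pA x) + ∫ x in T, pA x := by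
    rw [← hunion]
    exact setIntegral_union hST hTmeas hpAint.integrableOn hpAint.integrableOn
  have hTsub : T ⊆ closedBall xA (rA - ε) := by
    rintro x ⟨-, hx⟩
    exact mem_closedBall.mpr (le_of_lt hx)
  have hvolB : (volume (closedBall xA (rA - ε))).toReal = (rA - ε) ^ n * V.toReal := by
    rw [Measure.addHaar_closedBall' volume xA (le_of_lt hrAε)]
    rw [finrank_euclideanSpace_fin, ← hVdef, ENNReal.toReal_mul,
      ENNReal.toReal_ofReal (pow_nonneg (le_of_lt hrAε) n)]
  have hTbound : ∫ x in T, pA x ≤ C * (1 - ε / rA) ^ n := by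
    have h1 : ∫ x in T, pA x ≤ ∫ x in closedBall xA (rA - ε), pA x := by
      refine setIntegral_mono_set hpAint.integrableOn ?_ (HasSubset.Subset.eventuallyLE hTsub)
      exact Filter.Eventually.of_forall fun x => hpApos x
    have h2 : ∫ x in closedBall xA (rA - ε), pA x
        ≤ ∫ x in closedBall xA (rA - ε), (C / (V.toReal * rA ^ n)) := by
      refine setIntegral_mono_on hpAint.integrableOn ((integrableOn_const_iff (C := C / (V.toReal * rA ^ n))).mpr ?_)
        measurableSet_closedBall ?_
      · exact Or.inr measure_closedBall_lt_top
      · intro x hx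
        exact hbound x (closedBall_subset_closedBall (by linarith) hx)
    have h3 : ∫ x in closedBall xA (rA - ε), (C / (V.toReal * rA ^ n))
        = C * (1 - ε / rA) ^ n := by
      rw [setIntegral_const, smul_eq_mul, measureReal_def, hvolB]
      have hrw : 1 - ε / rA = (rA - ε) / rA := by field_simp
      rw [hrw, div_pow]
      field_simp
    linarith
  have hSnn : 0 ≤ ∫ x in S, pA x :=
    setIntegral_nonneg hSmeas fun x _ => hpApos x
  have hSmass : max (ν - C * (1 - ε / rA) ^ n) 0 ≤ ∫ x in S, pA x := by
    refine max_le ?_ hSnn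
    linarith [hmass, hsplit, hTbound]
  have hPA0 : 0 ≤ PA := by rw [hPA]; exact ENNReal.toReal_nonneg
  calc ENNReal.ofReal (PA * max (ν - C * (1 - ε / rA) ^ n) 0)
      ≤ ENNReal.ofReal (PA * ∫ x in S, pA x) :=
        ENNReal.ofReal_le_ofReal (mul_le_mul_of_nonneg_left hSmass hPA0)
    _ = μ (S ×ˢ {A}) := (hdens S hSmeas).symm
    _ ≤ μ {q : EuclideanSpace ℝ (Fin n) × L |
            ∃ y ∈ closedBall (0 : EuclideanSpace ℝ (Fin n)) 1,
              F y ≠ F q.1 ∧ ‖q.1 - y‖ ≤ ε + Δ} := by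
        refine measure_mono ?_
        rintro ⟨x, l⟩ ⟨hx, -⟩
        exact hadv x hx
end

section
/- Under the hypotheses of the adversarial-example theorem (conditions A1–A3), the probability that x admits an (ε+Δ)-adversarial example is at least P(A) · max{ν − C exp(−nε/r_A), 0}. -/
open MeasureTheory Metric

/-- Theorem 1 (existence of adversarial examples). Under assumptions A1–A3, for any
`ε ∈ (0, r_A)`, the probability that a sample `(x, l)` admits an `(ε+Δ)`-adversarial example
is at least `P(A) · max {ν − C exp(−nε/r_A), 0}`. -/
theorem stmt_5 (n : ℕ) (hn : 1 ≤ n)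
    (L : Type*) [MeasurableSpace L] (A : L)
    (F : EuclideanSpace ℝ (Fin n) → L)
    (μ : Measure (EuclideanSpace ℝ (Fin n) × L)) [IsProbabilityMeasure μ]
    (pA : EuclideanSpace ℝ (Fin n) → ℝ) (PA : ℝ)
    (xA : EuclideanSpace ℝ (Fin n)) (CA : Set (EuclideanSpace ℝ (Fin n)))
    (C rA ν Δ ε : ℝ)
    -- the marginal probability of label `A` and the conditional density of `x` given `l = A`
    (hPA : PA = (μ ((Set.univ : Set (EuclideanSpace ℝ (Fin n))) ×ˢ {A})).toReal)
    (hpAmeas : Measurable pA) (hpApos : ∀ x, 0 ≤ pA x) (hpAint : Integrable pA)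
    (hpAprob : ∫ x, pA x = 1)
    (hdens : ∀ S : Set (EuclideanSpace ℝ (Fin n)), MeasurableSet S →
      μ (S ×ˢ {A}) = ENNReal.ofReal (PA * ∫ x in S, pA x))
    -- A1
    (hxA : xA ∈ closedBall (0 : EuclideanSpace ℝ (Fin n)) 1)
    (hrA0 : 0 < rA) (hrA1 : rA < 1) (hCAsub : CA ⊆ closedBall xA rA)
    (hCAmeas : MeasurableSet CA)
    -- A2
    (hclass : ∀ x ∈ CA, F x = A) (hΔ : 0 < Δ)
    (hboundary : ∀ x ∈ sphere xA rA,
      ∃ y ∈ closedBall (0 : EuclideanSpace ℝ (Fin n)) 1, F y ≠ A ∧ ‖y - x‖ ≤ Δ)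
    -- A3
    (hC : 0 < C) (hν0 : 0 < ν) (hν1 : ν ≤ 1)
    (hbound : ∀ x ∈ closedBall xA rA,
      pA x ≤ C / ((volume (closedBall (0 : EuclideanSpace ℝ (Fin n)) 1)).toReal * rA ^ n))
    (hmass : ν ≤ ∫ x in CA, pA x)
    (hε : 0 < ε) (hεr : ε < rA) :
    ENNReal.ofReal (PA * max (ν - C * Real.exp (-((n : ℝ) * ε / rA))) 0)
      ≤ μ {q : EuclideanSpace ℝ (Fin n) × L |
            ∃ y ∈ closedBall (0 : EuclideanSpace ℝ (Fin n)) 1,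
              F y ≠ F q.1 ∧ ‖q.1 - y‖ ≤ ε + Δ} := by

  classical
  haveI : Nontrivial (EuclideanSpace ℝ (Fin n)) :=
    Module.nontrivial_of_finrank_pos (R := ℝ)
      (by simp [finrank_euclideanSpace_fin]; omega)
  set V : ENNReal := volume (closedBall (0 : EuclideanSpace ℝ (Fin n)) 1) with hV
  set S : Set (EuclideanSpace ℝ (Fin n)) := CA \ ball xA (rA - ε) with hS
  have hSmeas : MeasurableSet S := hCAmeas.diff measurableSet_ball
  -- every x ∈ S admits an adversarial example
  have hadv : ∀ x ∈ S, ∃ y ∈ closedBall (0 : EuclideanSpace ℝ (Fin n)) 1,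
      F y ≠ F x ∧ ‖x - y‖ ≤ ε + Δ := by
    intro x hx
    obtain ⟨hxCA, hxball⟩ := hx
    have hd : rA - ε ≤ dist x xA := by
      simpa [Metric.mem_ball, not_lt] using hxball
    have hd0 : 0 < dist x xA := lt_of_lt_of_le (by linarith) hd
    have hdle : dist x xA ≤ rA := (Metric.mem_closedBall.mp (hCAsub hxCA))
    have hnorm : ‖x - xA‖ = dist x xA := (dist_eq_norm x xA).symm
    have hdp : 0 < ‖x - xA‖ := by rw [hnorm]; exact hd0
    have hdne : ‖x - xA‖ ≠ 0 := ne_of_gt hdp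
    set z : EuclideanSpace ℝ (Fin n) := xA + (rA / ‖x - xA‖) • (x - xA) with hz
    have hzsphere : z ∈ sphere xA rA := by
      have h : dist z xA = rA := by
        rw [dist_eq_norm]
        have he : z - xA = (rA / ‖x - xA‖) • (x - xA) := by rw [hz]; abel
        rw [he, norm_smul, Real.norm_eq_abs, abs_of_pos (div_pos hrA0 hdp)]
        field_simp
      exact mem_sphere.mpr h
    have hzx : ‖z - x‖ ≤ ε := by
      have h1 : z - x = ((rA / ‖x - xA‖) - 1) • (x - xA) := by
        rw [hz, sub_smul, one_smul]; abel
      have h2 : (0:ℝ) ≤ rA / ‖x - xA‖ - 1 := by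
        rw [sub_nonneg, le_div_iff₀ hdp, one_mul, hnorm]; exact hdle
      rw [h1, norm_smul, Real.norm_eq_abs, abs_of_nonneg h2]
      have h3 : (rA / ‖x - xA‖ - 1) * ‖x - xA‖ = rA - ‖x - xA‖ := by field_simp
      rw [h3, hnorm]; linarith
    obtain ⟨y, hy1, hyA, hyz⟩ := hboundary z hzsphere
    refine ⟨y, hy1, ?_, ?_⟩
    · rw [hclass x hxCA]; exact hyA
    · calc ‖x - y‖ ≤ ‖x - z‖ + ‖z - y‖ := by
            have h : x - y = (x - z) + (z - y) := by abel
            rw [h]; exact norm_add_le _ _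
        _ ≤ ε + Δ := by
            have h1 : ‖x - z‖ ≤ ε := by rw [← norm_neg]; simpa using hzx
            have h2 : ‖z - y‖ ≤ Δ := by rw [← norm_neg]; simpa using hyz
            linarith
  -- S ×ˢ {A} is contained in the adversarial set
  have hsub : S ×ˢ ({A} : Set L) ⊆ {q : EuclideanSpace ℝ (Fin n) × L |
      ∃ y ∈ closedBall (0 : EuclideanSpace ℝ (Fin n)) 1,
        F y ≠ F q.1 ∧ ‖q.1 - y‖ ≤ ε + Δ} := by
    rintro ⟨x, l⟩ ⟨hx, _⟩
    exact hadv x hx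
  -- volume facts
  have hVpos : 0 < V := by
    rw [hV]; exact measure_closedBall_pos _ _ one_pos
  have hVfin : V < ⊤ := by rw [hV]; exact measure_closedBall_lt_top
  have hVtpos : 0 < V.toReal := ENNReal.toReal_pos (ne_of_gt hVpos) (ne_of_lt hVfin)
  set K : ℝ := C / (V.toReal * rA ^ n) with hK
  have hKpos : 0 < K := div_pos hC (mul_pos hVtpos (pow_pos hrA0 n))
  -- bound on the integral over the inner ball part
  have hinner : ∫ x in CA ∩ ball xA (rA - ε), pA x ≤ C * Real.exp (-((n : ℝ) * ε / rA)) := by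
    have hfinvol : volume (CA ∩ ball xA (rA - ε)) < ⊤ := by
      exact lt_of_le_of_lt (measure_mono Set.inter_subset_right)
        (measure_ball_lt_top (x := xA) (r := rA - ε))
    have hb : ∀ x ∈ CA ∩ ball xA (rA - ε), ‖pA x‖ ≤ K := by
      intro x hx
      rw [Real.norm_eq_abs, abs_of_nonneg (hpApos x)]
      exact hbound x (hCAsub hx.1)
    have h1 : ‖∫ x in CA ∩ ball xA (rA - ε), pA x‖
        ≤ K * (volume (CA ∩ ball xA (rA - ε))).toReal :=
      by have := norm_setIntegral_le_of_norm_le_const hfinvol hb; exact this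
    have h2 : ∫ x in CA ∩ ball xA (rA - ε), pA x
        ≤ K * (volume (CA ∩ ball xA (rA - ε))).toReal :=
      le_trans (le_abs_self _) h1
    have hvolle : (volume (CA ∩ ball xA (rA - ε))).toReal
        ≤ (rA - ε) ^ n * V.toReal := by
      have hmono : volume (CA ∩ ball xA (rA - ε)) ≤ volume (closedBall xA (rA - ε)) :=
        measure_mono (Set.inter_subset_right.trans ball_subset_closedBall)
      have hcb : volume (closedBall xA (rA - ε))
          = ENNReal.ofReal ((rA - ε) ^ n) * V := by
        rw [hV, Measure.addHaar_closedBall volume xA (by linarith : (0:ℝ) ≤ rA - ε)]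
        rw [← Measure.addHaar_closedBall_eq_addHaar_ball]
        congr 2
        simp [finrank_euclideanSpace_fin]
      calc (volume (CA ∩ ball xA (rA - ε))).toReal
          ≤ (volume (closedBall xA (rA - ε))).toReal := by
            apply ENNReal.toReal_mono _ hmono
            rw [hcb]
            exact ENNReal.mul_ne_top ENNReal.ofReal_ne_top (ne_of_lt hVfin)
        _ = (rA - ε) ^ n * V.toReal := by
            rw [hcb, ENNReal.toReal_mul, ENNReal.toReal_ofReal (pow_nonneg (by linarith) n)]
    have h3 : K * ((rA - ε) ^ n * V.toReal) = C * ((rA - ε) / rA) ^ n := by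
      rw [hK]; field_simp; rw [← mul_pow]; congr 1
      exact (mul_div_cancel₀ (rA - ε) hrA0.ne').symm
    have h4 : ((rA - ε) / rA) ^ n ≤ Real.exp (-((n : ℝ) * ε / rA)) := by
      have hb0 : (0:ℝ) ≤ (rA - ε) / rA := div_nonneg (by linarith) hrA0.le
      have hble : (rA - ε) / rA ≤ Real.exp (-(ε / rA)) := by
        have := Real.add_one_le_exp (-(ε / rA))
        have heq : (rA - ε) / rA = 1 - ε / rA := by field_simp
        rw [heq]; linarith
      calc ((rA - ε) / rA) ^ n ≤ (Real.exp (-(ε / rA))) ^ n :=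
            pow_le_pow_left₀ hb0 hble n
        _ = Real.exp ((n : ℝ) * (-(ε / rA))) := by
            rw [← Real.exp_nat_mul]
        _ = Real.exp (-((n : ℝ) * ε / rA)) := by ring_nf
    calc ∫ x in CA ∩ ball xA (rA - ε), pA x
        ≤ K * (volume (CA ∩ ball xA (rA - ε))).toReal := h2
      _ ≤ K * ((rA - ε) ^ n * V.toReal) :=
          mul_le_mul_of_nonneg_left hvolle (le_of_lt hKpos)
      _ = C * ((rA - ε) / rA) ^ n := h3
      _ ≤ C * Real.exp (-((n : ℝ) * ε / rA)) :=
          mul_le_mul_of_nonneg_left h4 (le_of_lt hC)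
  -- integral over S
  have hsplit : (∫ x in CA ∩ ball xA (rA - ε), pA x) + (∫ x in S, pA x)
      = ∫ x in CA, pA x := by
    rw [hS]
    exact integral_inter_add_diff measurableSet_ball hpAint.integrableOn
  have hSlb : ν - C * Real.exp (-((n : ℝ) * ε / rA)) ≤ ∫ x in S, pA x := by
    have := hsplit
    nlinarith [hmass, hinner]
  have hSnn : 0 ≤ ∫ x in S, pA x :=
    setIntegral_nonneg hSmeas (fun x _ => hpApos x)
  have hPAnn : 0 ≤ PA := by rw [hPA]; exact ENNReal.toReal_nonneg
  have hmaxle : max (ν - C * Real.exp (-((n : ℝ) * ε / rA))) 0 ≤ ∫ x in S, pA x :=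
    max_le hSlb hSnn
  calc ENNReal.ofReal (PA * max (ν - C * Real.exp (-((n : ℝ) * ε / rA))) 0)
      ≤ ENNReal.ofReal (PA * ∫ x in S, pA x) :=
        ENNReal.ofReal_le_ofReal (mul_le_mul_of_nonneg_left hmaxle hPAnn)
    _ = μ (S ×ˢ ({A} : Set L)) := (hdens S hSmeas).symm
    _ ≤ _ := measure_mono hsub
end

section
/- Let x' be drawn from the uniform distribution on the unit ball B_n in R^n, let x_1, …, x_M be M fixed points in B_n, and let γ ∈ (1/2, 1). Then the probability that γ‖x'‖² > (x', x_i) for all i = 1, …, M is at least 1 − M (1/(2γ))^n. -/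
open MeasureTheory Metric
open scoped RealInnerProductSpace

/-- Separation estimate: for `x'` uniform on the unit ball and fixed points
`x_1, …, x_M` in the ball, the probability that `γ‖x'‖² > ⟪x', x_i⟫` for all `i`
is at least `1 − M (1/(2γ))^n`. -/
theorem stmt_8 (n : ℕ) (M : ℕ) (γ : ℝ) (hγ1 : 1 / 2 < γ) (hγ2 : γ < 1)
    (v : Fin M → EuclideanSpace ℝ (Fin n))
    (hv : ∀ i, v i ∈ closedBall (0 : EuclideanSpace ℝ (Fin n)) 1) :
    1 - (M : ENNReal) * ENNReal.ofReal ((1 / (2 * γ)) ^ n) ≤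
      ((volume (closedBall (0 : EuclideanSpace ℝ (Fin n)) 1))⁻¹ •
          volume.restrict (closedBall (0 : EuclideanSpace ℝ (Fin n)) 1))
        {x' : EuclideanSpace ℝ (Fin n) | ∀ i, γ * ‖x'‖ ^ 2 > ⟪x', v i⟫} := by
  classical
  set B := closedBall (0 : EuclideanSpace ℝ (Fin n)) 1 with hB
  have hγ0 : (0:ℝ) < γ := lt_trans (by norm_num) hγ1
  set μ := (volume B)⁻¹ • volume.restrict B with hμ
  have hBpos : 0 < volume B := measure_closedBall_pos _ _ one_pos
  have hBlt : volume B < ⊤ := measure_closedBall_lt_top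
  have hμuniv : μ Set.univ = 1 := by
    simp only [hμ, Measure.smul_apply, Measure.restrict_apply_univ, smul_eq_mul]
    exact ENNReal.inv_mul_cancel hBpos.ne' hBlt.ne
  set G := {x' : EuclideanSpace ℝ (Fin n) | ∀ i, γ * ‖x'‖ ^ 2 > ⟪x', v i⟫} with hG
  have hsub : Gᶜ ⊆ ⋃ i, closedBall ((2*γ)⁻¹ • v i) (1/(2*γ)) := by
    intro x hx
    simp only [hG, Set.mem_compl_iff, Set.mem_setOf_eq, not_forall, not_lt] at hx
    obtain ⟨i, hi⟩ := hx
    refine Set.mem_iUnion.2 ⟨i, ?_⟩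
    rw [mem_closedBall, dist_eq_norm]
    have hv1 : ‖v i‖ ≤ 1 := by
      have := hv i
      rw [hB, mem_closedBall, dist_zero_right] at this
      exact this
    have hinv : (0:ℝ) < (2*γ)⁻¹ := by positivity
    have e1 : 2*(2*γ)⁻¹*(γ*‖x‖^2) = ‖x‖^2 := by field_simp
    have h2 : ‖x‖^2 ≤ 2*(2*γ)⁻¹ * ⟪x, v i⟫ := by
      have := mul_le_mul_of_nonneg_left hi (show (0:ℝ) ≤ 2*(2*γ)⁻¹ by positivity)
      linarith [e1 ▸ this]
    have h3 : ((2*γ)⁻¹*‖v i‖)^2 ≤ (1/(2*γ))^2 := by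
      rw [mul_pow, one_div]
      have hv2 : ‖v i‖^2 ≤ 1 := by nlinarith [norm_nonneg (v i)]
      nlinarith [mul_le_mul_of_nonneg_left hv2 (sq_nonneg ((2*γ)⁻¹))]
    have key : ‖x - (2*γ)⁻¹ • v i‖ ^ 2 ≤ (1/(2*γ))^2 := by
      rw [norm_sub_sq_real, real_inner_smul_right, norm_smul, Real.norm_eq_abs,
        abs_of_pos hinv]
      linarith
    have := (pow_le_pow_iff_left₀ (norm_nonneg _) (by positivity) two_ne_zero).1 key
    linarith
  have hball : ∀ i : Fin M,
      volume (closedBall ((2*γ)⁻¹ • v i) (1/(2*γ)))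
        = ENNReal.ofReal ((1/(2*γ))^n) * volume B := by
    intro i
    rw [hB, Measure.addHaar_closedBall' _ _ (by positivity : (0:ℝ) ≤ 1/(2*γ)),
      finrank_euclideanSpace_fin]
  have hGc : μ Gᶜ ≤ (M : ENNReal) * ENNReal.ofReal ((1 / (2 * γ)) ^ n) := by
    have h1 : μ Gᶜ ≤ (volume B)⁻¹ * volume (⋃ i, closedBall ((2*γ)⁻¹ • v i) (1/(2*γ))) := by
      rw [hμ, Measure.smul_apply, smul_eq_mul]
      exact mul_le_mul_right
        (le_trans (Measure.restrict_le_self _) (measure_mono hsub)) _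
    have h2 : volume (⋃ i, closedBall ((2*γ)⁻¹ • v i) (1/(2*γ)))
        ≤ (M : ENNReal) * (ENNReal.ofReal ((1/(2*γ))^n) * volume B) := by
      have hsum : ∑ i : Fin M, volume (closedBall ((2*γ)⁻¹ • v i) (1/(2*γ)))
          = (M : ENNReal) * (ENNReal.ofReal ((1/(2*γ))^n) * volume B) := by
        rw [Finset.sum_congr rfl fun i _ => hball i, Finset.sum_const,
          Finset.card_univ, Fintype.card_fin, nsmul_eq_mul]
      exact le_trans (measure_iUnion_fintype_le _ _) (le_of_eq hsum)
    calc μ Gᶜ ≤ (volume B)⁻¹ * volume (⋃ i, closedBall ((2*γ)⁻¹ • v i) (1/(2*γ))) := h1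
      _ ≤ (volume B)⁻¹ * ((M : ENNReal) * (ENNReal.ofReal ((1/(2*γ))^n) * volume B)) :=
          mul_le_mul_right h2 _
      _ = (M : ENNReal) * ENNReal.ofReal ((1/(2*γ))^n) * ((volume B)⁻¹ * volume B) := by
          ring
      _ = (M : ENNReal) * ENNReal.ofReal ((1/(2*γ))^n) := by
          rw [ENNReal.inv_mul_cancel hBpos.ne' hBlt.ne, mul_one]
  have hcov : 1 ≤ μ G + μ Gᶜ := by
    rw [← hμuniv, ← Set.union_compl_self G]
    exact measure_union_le _ _
  calc 1 - (M : ENNReal) * ENNReal.ofReal ((1 / (2 * γ)) ^ n)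
      ≤ 1 - μ Gᶜ := tsub_le_tsub_left hGc _
    _ ≤ μ G := by
        rw [tsub_le_iff_right]
        exact hcov.trans (by rw [add_comm])
end

section
/- (ReLU stealth attack) Let F : B_n → R, let x' ≠ 0 in B_n, and let V ⊆ B_n be finite with γ‖x'‖² > (x', v) for all v ∈ V, γ ∈ (0,1). Define F_a(x) = F(x) + D·ReLU((x, κx') − b) with b = κ((1+γ)/2)‖x'‖², κ > 0, and D = Δ / (κ((1−γ)/2)‖x'‖²) for a given Δ > 0. Then F_a(v) = F(v) for every v ∈ V, and F_a(x') = F(x') + Δ. -/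
open Metric
open scoped RealInnerProductSpace

/-- ReLU stealth attack: with `b = κ((1+γ)/2)‖x'‖²` and
`D = Δ / (κ((1−γ)/2)‖x'‖²)`, the modified map
`F_a(x) = F(x) + D·ReLU(⟪x, κx'⟫ − b)` coincides with `F` on the verification set `V`
and satisfies `F_a(x') = F(x') + Δ`. -/
theorem stmt_10 (n : ℕ) (F : EuclideanSpace ℝ (Fin n) → ℝ)
    (x' : EuclideanSpace ℝ (Fin n))
    (hx' : x' ∈ closedBall (0 : EuclideanSpace ℝ (Fin n)) 1) (hx0 : x' ≠ 0)
    (V : Finset (EuclideanSpace ℝ (Fin n)))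
    (hV : ∀ v ∈ V, (v : EuclideanSpace ℝ (Fin n)) ∈ closedBall (0 : EuclideanSpace ℝ (Fin n)) 1)
    (γ κ Δ : ℝ) (hγ0 : 0 < γ) (hγ1 : γ < 1) (hκ : 0 < κ) (hΔ : 0 < Δ)
    (hsep : ∀ v ∈ V, γ * ‖x'‖ ^ 2 > ⟪x', v⟫)
    (b D : ℝ) (hb : b = κ * ((1 + γ) / 2) * ‖x'‖ ^ 2)
    (hD : D = Δ / (κ * ((1 - γ) / 2) * ‖x'‖ ^ 2))
    (Fa : EuclideanSpace ℝ (Fin n) → ℝ)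
    (hFa : ∀ x, Fa x = F x + D * max (⟪x, κ • x'⟫ - b) 0) :
    (∀ v ∈ V, Fa v = F v) ∧ Fa x' = F x' + Δ := by
  have hnx : 0 < ‖x'‖ := norm_pos_iff.mpr hx0
  have hn2 : 0 < ‖x'‖ ^ 2 := by positivity
  constructor
  · intro v hv
    have h1 : ⟪v, κ • x'⟫ = κ * ⟪x', v⟫ := by
      rw [real_inner_smul_right, real_inner_comm]
    have h2 : ⟪v, κ • x'⟫ - b ≤ 0 := by
      rw [h1, hb]
      have := hsep v hv
      nlinarith [mul_lt_mul_of_pos_left this hκ, mul_pos hκ hn2]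
    rw [hFa, max_eq_right h2]
    ring
  · have h1 : ⟪x', κ • x'⟫ = κ * ‖x'‖ ^ 2 := by
      rw [real_inner_smul_right, real_inner_self_eq_norm_sq]
    have h2 : ⟪x', κ • x'⟫ - b = κ * ((1 - γ) / 2) * ‖x'‖ ^ 2 := by
      rw [h1, hb]; ring
    have hpos : 0 < κ * ((1 - γ) / 2) * ‖x'‖ ^ 2 :=
      mul_pos (mul_pos hκ (by linarith : (0:ℝ) < (1 - γ) / 2)) hn2
    rw [hFa, h2, max_eq_left hpos.le, hD,
      div_mul_cancel₀ _ hpos.ne']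
end

section
/- (Stealth attack, Theorem 2) Let F : B_n → R, let V ⊆ B_n be a finite set of cardinality at most M, let ε > 0, Δ > 0, γ ∈ (1/2, 1), and let g be either ReLU or the logistic sigmoid. Let x' be drawn uniformly from B_n, and define F_a(x) = F(x) + D·g((x, κx') − b) with b = κ((1+γ)/2)‖x'‖², where κ, D > 0 are chosen so that D·g(−κ((1−γ)/2)‖x'‖²) ≤ ε and D·g(κ((1−γ)/2)‖x'‖²) ≥ Δ. Then with probability at least 1 − M(1/(2γ))^n over the draw of x', it holds that |F_a(v) − F(v)| ≤ ε for all v ∈ V and F_a(x') ≥ F(x') + Δ. -/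
open MeasureTheory Metric
open scoped RealInnerProductSpace

/-- Theorem 2 (stealth attack). For `x'` drawn uniformly from the unit ball, with
probability at least `1 − M(1/(2γ))^n` the single-neuron modification
`F_a(x) = F(x) + D·g(⟪x, κx'⟫ − b)`, `b = κ((1+γ)/2)‖x'‖²`, where `g` is ReLU or the
logistic sigmoid and `κ, D > 0` satisfy `D·g(−κ((1−γ)/2)‖x'‖²) ≤ ε` and
`D·g(κ((1−γ)/2)‖x'‖²) ≥ Δ`, changes `F` by at most `ε` on the verification set `V`
(of cardinality at most `M`) while `F_a(x') ≥ F(x') + Δ`. -/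
theorem stmt_12 (n : ℕ) (F : EuclideanSpace ℝ (Fin n) → ℝ)
    (V : Finset (EuclideanSpace ℝ (Fin n))) (M : ℕ) (hVcard : V.card ≤ M)
    (hV : ∀ v ∈ V, (v : EuclideanSpace ℝ (Fin n)) ∈ closedBall (0 : EuclideanSpace ℝ (Fin n)) 1)
    (ε Δ γ : ℝ) (hε : 0 < ε) (hΔ : 0 < Δ) (hγ1 : 1 / 2 < γ) (hγ2 : γ < 1)
    (g : ℝ → ℝ)
    (hg : g = (fun s => max s 0) ∨ g = fun s => 1 / (1 + Real.exp (-s))) :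
    1 - (M : ENNReal) * ENNReal.ofReal ((1 / (2 * γ)) ^ n) ≤
      ((volume (closedBall (0 : EuclideanSpace ℝ (Fin n)) 1))⁻¹ •
          volume.restrict (closedBall (0 : EuclideanSpace ℝ (Fin n)) 1))
        {x' : EuclideanSpace ℝ (Fin n) |
          ∀ κ D : ℝ, 0 < κ → 0 < D →
            D * g (-(κ * ((1 - γ) / 2) * ‖x'‖ ^ 2)) ≤ ε →
            Δ ≤ D * g (κ * ((1 - γ) / 2) * ‖x'‖ ^ 2) →
            (∀ v ∈ V,
              |(F v + D * g (⟪v, κ • x'⟫ - κ * ((1 + γ) / 2) * ‖x'‖ ^ 2)) - F v| ≤ ε) ∧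
            F x' + Δ ≤ F x' + D * g (⟪x', κ • x'⟫ - κ * ((1 + γ) / 2) * ‖x'‖ ^ 2)} := by
  have hγ0 : (0:ℝ) < γ := by linarith
  have h2γ : (0:ℝ) < 2 * γ := by linarith
  -- properties of g
  have hg0 : ∀ s, 0 ≤ g s := by
    rcases hg with h | h <;> subst h <;> intro s
    · exact le_max_right _ _
    · positivity
  have hgmono : Monotone g := by
    rcases hg with h | h <;> subst h
    · exact fun a b hab => max_le_max hab le_rfl
    · intro a b hab
      have hea : (0:ℝ) < 1 + Real.exp (-b) := by positivity
      have : Real.exp (-b) ≤ Real.exp (-a) := Real.exp_le_exp.2 (by linarith)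
      exact one_div_le_one_div_of_le hea (by linarith)
  set B : Set (EuclideanSpace ℝ (Fin n)) := closedBall 0 1 with hB
  set c : ENNReal := volume B with hc
  have hc0 : c ≠ 0 := (measure_closedBall_pos volume 0 one_pos).ne'
  have hctop : c ≠ ⊤ := measure_closedBall_lt_top.ne
  set μ : Measure (EuclideanSpace ℝ (Fin n)) := c⁻¹ • volume.restrict B with hμ
  set Ev : Set (EuclideanSpace ℝ (Fin n)) := {x' : EuclideanSpace ℝ (Fin n) |
          ∀ κ D : ℝ, 0 < κ → 0 < D →
            D * g (-(κ * ((1 - γ) / 2) * ‖x'‖ ^ 2)) ≤ ε →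
            Δ ≤ D * g (κ * ((1 - γ) / 2) * ‖x'‖ ^ 2) →
            (∀ v ∈ V,
              |(F v + D * g (⟪v, κ • x'⟫ - κ * ((1 + γ) / 2) * ‖x'‖ ^ 2)) - F v| ≤ ε) ∧
            F x' + Δ ≤ F x' + D * g (⟪x', κ • x'⟫ - κ * ((1 + γ) / 2) * ‖x'‖ ^ 2)} with hEv
  set G : Set (EuclideanSpace ℝ (Fin n)) :=
    {x : EuclideanSpace ℝ (Fin n) | ∀ v ∈ V, ⟪v, x⟫ ≤ γ * ‖x‖ ^ 2} with hG
  -- G ⊆ Ev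
  have hGE : G ⊆ Ev := by
    intro x hx
    intro κ D hκ hD h1 h2
    constructor
    · intro v hv
      rw [add_sub_cancel_left]
      have harg : ⟪v, κ • x⟫ - κ * ((1 + γ) / 2) * ‖x‖ ^ 2 ≤
          -(κ * ((1 - γ) / 2) * ‖x‖ ^ 2) := by
        rw [real_inner_smul_right]
        have := hx v hv
        nlinarith [sq_nonneg ‖x‖]
      have hnn : 0 ≤ D * g (⟪v, κ • x⟫ - κ * ((1 + γ) / 2) * ‖x‖ ^ 2) :=
        mul_nonneg hD.le (hg0 _)
      rw [abs_of_nonneg hnn]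
      calc D * g (⟪v, κ • x⟫ - κ * ((1 + γ) / 2) * ‖x‖ ^ 2)
          ≤ D * g (-(κ * ((1 - γ) / 2) * ‖x‖ ^ 2)) :=
            mul_le_mul_of_nonneg_left (hgmono harg) hD.le
        _ ≤ ε := h1
    · have harg : ⟪x, κ • x⟫ - κ * ((1 + γ) / 2) * ‖x‖ ^ 2 =
          κ * ((1 - γ) / 2) * ‖x‖ ^ 2 := by
        rw [real_inner_smul_right, real_inner_self_eq_norm_sq]; ring
      rw [harg]
      linarith
  -- bound μ Gᶜ
  have hGc : μ Gᶜ ≤ (M : ENNReal) * ENNReal.ofReal ((1 / (2 * γ)) ^ n) := by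
    have hsub : Gᶜ ⊆ ⋃ v ∈ V, {x : EuclideanSpace ℝ (Fin n) | γ * ‖x‖ ^ 2 < ⟪v, x⟫} := by
      intro x hx
      simp only [hG, Set.mem_compl_iff, Set.mem_setOf_eq, not_forall] at hx
      obtain ⟨v, hv, hlt⟩ := hx
      exact Set.mem_biUnion hv (by simpa using lt_of_not_ge hlt)
    have hball : ∀ v ∈ V, {x : EuclideanSpace ℝ (Fin n) | γ * ‖x‖ ^ 2 < ⟪v, x⟫} ⊆
        closedBall ((2 * γ)⁻¹ • v) ((2 * γ)⁻¹) := by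
      intro v hv x hx
      simp only [Set.mem_setOf_eq] at hx
      have hv1 : ‖v‖ ≤ 1 := by simpa [hB, mem_closedBall_zero_iff] using hV v hv
      rw [mem_closedBall, dist_eq_norm]
      have hcγ : (2 * γ)⁻¹ * γ = 1 / 2 := by field_simp
      have hsq : ‖x - (2 * γ)⁻¹ • v‖ ^ 2 ≤ ((2 * γ)⁻¹) ^ 2 := by
        have hexp := norm_sub_sq_real x ((2 * γ)⁻¹ • v)
        rw [real_inner_smul_right, norm_smul, Real.norm_eq_abs,
          abs_of_pos (by positivity : (0:ℝ) < (2 * γ)⁻¹)] at hexp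
        rw [real_inner_comm] at hexp
        have h1 : 2 * (2 * γ)⁻¹ * (γ * ‖x‖ ^ 2) < 2 * (2 * γ)⁻¹ * ⟪v, x⟫ :=
          mul_lt_mul_of_pos_left hx (by positivity)
        have h2 : ‖v‖ * ‖v‖ ≤ 1 :=
          mul_le_one₀ hv1 (norm_nonneg v) hv1
        nlinarith [sq_nonneg ((2 * γ)⁻¹), norm_nonneg v]
      nlinarith [norm_nonneg (x - (2 * γ)⁻¹ • v), inv_pos.2 h2γ, hsq]
    have hμball : ∀ v : EuclideanSpace ℝ (Fin n),
        μ (closedBall ((2 * γ)⁻¹ • v) ((2 * γ)⁻¹)) ≤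
        ENNReal.ofReal ((1 / (2 * γ)) ^ n) := by
      intro v
      have hvol : volume (closedBall ((2 * γ)⁻¹ • v) ((2 * γ)⁻¹)) =
          ENNReal.ofReal (((2 * γ)⁻¹) ^ n) * c := by
        rw [Measure.addHaar_closedBall' volume _ (by positivity : (0:ℝ) ≤ (2 * γ)⁻¹)]
        rw [hc, hB]
        norm_num [finrank_euclideanSpace_fin]
      have hres : (volume.restrict B) (closedBall ((2 * γ)⁻¹ • v) ((2 * γ)⁻¹)) ≤
          ENNReal.ofReal (((2 * γ)⁻¹) ^ n) * c := by
        rw [← hvol]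
        exact Measure.restrict_le_self _
      calc μ (closedBall ((2 * γ)⁻¹ • v) ((2 * γ)⁻¹))
          = c⁻¹ * (volume.restrict B) (closedBall ((2 * γ)⁻¹ • v) ((2 * γ)⁻¹)) := by
            simp [hμ]
        _ ≤ c⁻¹ * (ENNReal.ofReal (((2 * γ)⁻¹) ^ n) * c) :=
            mul_le_mul_right hres _
        _ = ENNReal.ofReal (((2 * γ)⁻¹) ^ n) * (c⁻¹ * c) := by ring
        _ = ENNReal.ofReal ((1 / (2 * γ)) ^ n) := by
            rw [ENNReal.inv_mul_cancel hc0 hctop, mul_one, one_div]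
    calc μ Gᶜ ≤ μ (⋃ v ∈ V, {x : EuclideanSpace ℝ (Fin n) | γ * ‖x‖ ^ 2 < ⟪v, x⟫}) :=
          measure_mono hsub
      _ ≤ ∑ v ∈ V, μ {x : EuclideanSpace ℝ (Fin n) | γ * ‖x‖ ^ 2 < ⟪v, x⟫} :=
          measure_biUnion_finset_le V _
      _ ≤ ∑ v ∈ V, ENNReal.ofReal ((1 / (2 * γ)) ^ n) := by
          refine Finset.sum_le_sum fun v hv => ?_
          exact le_trans (measure_mono (hball v hv)) (hμball v)
      _ = (V.card : ENNReal) * ENNReal.ofReal ((1 / (2 * γ)) ^ n) := by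
          rw [Finset.sum_const, nsmul_eq_mul]
      _ ≤ (M : ENNReal) * ENNReal.ofReal ((1 / (2 * γ)) ^ n) :=
          mul_le_mul_left (by exact_mod_cast hVcard) _
  -- total mass 1
  have hμuniv : μ Set.univ = 1 := by
    simp only [hμ, Measure.smul_apply, Measure.restrict_apply MeasurableSet.univ,
      Set.univ_inter, smul_eq_mul]
    exact ENNReal.inv_mul_cancel hc0 hctop
  -- conclude
  show 1 - (M : ENNReal) * ENNReal.ofReal ((1 / (2 * γ)) ^ n) ≤ μ Ev
  rw [tsub_le_iff_right]
  calc (1 : ENNReal) = μ Set.univ := hμuniv.symm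
    _ = μ (G ∪ Gᶜ) := by rw [Set.union_compl_self]
    _ ≤ μ G + μ Gᶜ := measure_union_le _ _
    _ ≤ μ Ev + (M : ENNReal) * ENNReal.ofReal ((1 / (2 * γ)) ^ n) :=
        add_le_add (measure_mono hGE) hGc
end

section
/- (Stealth attack with bell-shaped activation) Let g : R → R satisfy g(0) = 1, g nonnegative, and g(s) ≤ g(−(1−γ)κ‖x'‖²) for all s ≤ −(1−γ)κ‖x'‖² (e.g., g monotone increasing on (−∞,0]). Let x' ≠ 0 in B_n and V ⊆ B_n finite with γ‖x'‖² > (x', v) for all v ∈ V, γ ∈ (0,1). Define F_a(x) = F(x) + D·g((x, κx') − κ‖x'‖²) with D ≥ Δ and D·g(−κ(1−γ)‖x'‖²) ≤ ε. Then |F_a(v) − F(v)| ≤ ε for all v ∈ V and F_a(x') = F(x') + D ≥ F(x') + Δ. -/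
open Metric
open scoped RealInnerProductSpace

/-- Stealth attack with a bell-shaped activation `g` (with `g(0) = 1`, `g ≥ 0`, and `g`
bounded on `(−∞, −(1−γ)κ‖x'‖²]` by its value at `−(1−γ)κ‖x'‖²`), bias `b = κ‖x'‖²`:
`|F_a(v) − F(v)| ≤ ε` for all `v ∈ V` and `F_a(x') = F(x') + D ≥ F(x') + Δ`. -/
theorem stmt_15 (n : ℕ) (F : EuclideanSpace ℝ (Fin n) → ℝ) (g : ℝ → ℝ)
    (x' : EuclideanSpace ℝ (Fin n))
    (hx' : x' ∈ closedBall (0 : EuclideanSpace ℝ (Fin n)) 1) (hx0 : x' ≠ 0)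
    (V : Finset (EuclideanSpace ℝ (Fin n)))
    (hV : ∀ v ∈ V, (v : EuclideanSpace ℝ (Fin n)) ∈ closedBall (0 : EuclideanSpace ℝ (Fin n)) 1)
    (γ κ D Δ ε : ℝ) (hγ0 : 0 < γ) (hγ1 : γ < 1) (hκ : 0 < κ) (hΔ : 0 < Δ) (hε : 0 < ε)
    (hg0 : g 0 = 1) (hgpos : ∀ s, 0 ≤ g s)
    (hgmono : ∀ s, s ≤ -((1 - γ) * κ * ‖x'‖ ^ 2) → g s ≤ g (-((1 - γ) * κ * ‖x'‖ ^ 2)))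
    (hsep : ∀ v ∈ V, γ * ‖x'‖ ^ 2 > ⟪x', v⟫)
    (hD : Δ ≤ D) (hDg : D * g (-(κ * (1 - γ) * ‖x'‖ ^ 2)) ≤ ε)
    (Fa : EuclideanSpace ℝ (Fin n) → ℝ)
    (hFa : ∀ x, Fa x = F x + D * g (⟪x, κ • x'⟫ - κ * ‖x'‖ ^ 2)) :
    (∀ v ∈ V, |Fa v - F v| ≤ ε) ∧ Fa x' = F x' + D ∧ F x' + Δ ≤ Fa x' := by
  have hDpos : 0 < D := lt_of_lt_of_le hΔ hD
  have key : ∀ v ∈ V, |Fa v - F v| ≤ ε := by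
    intro v hv
    have hip : ⟪v, κ • x'⟫ = κ * ⟪x', v⟫ := by
      rw [real_inner_smul_right, real_inner_comm]
    have harg : ⟪v, κ • x'⟫ - κ * ‖x'‖ ^ 2 ≤ -((1 - γ) * κ * ‖x'‖ ^ 2) := by
      rw [hip]
      nlinarith [hsep v hv]
    have h1 : g (⟪v, κ • x'⟫ - κ * ‖x'‖ ^ 2) ≤ g (-((1 - γ) * κ * ‖x'‖ ^ 2)) :=
      hgmono _ harg
    have heq : -((1 - γ) * κ * ‖x'‖ ^ 2) = -(κ * (1 - γ) * ‖x'‖ ^ 2) := by ring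
    rw [hFa v]
    have h2 : 0 ≤ D * g (⟪v, κ • x'⟫ - κ * ‖x'‖ ^ 2) :=
      mul_nonneg hDpos.le (hgpos _)
    rw [abs_le]
    constructor
    · linarith
    · have := mul_le_mul_of_nonneg_left h1 hDpos.le
      rw [heq] at this
      linarith
  have hx'eq : Fa x' = F x' + D := by
    rw [hFa x']
    have : ⟪x', κ • x'⟫ - κ * ‖x'‖ ^ 2 = 0 := by
      rw [real_inner_smul_right, real_inner_self_eq_norm_sq]
      ring
    rw [this, hg0, mul_one]
  exact ⟨key, hx'eq, by rw [hx'eq]; linarith⟩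
end

section
/- For x' drawn uniformly from the unit ball B_n in R^n and a single fixed point v ∈ B_n, the probability that (x', v) ≥ γ‖x'‖² (failure of separation) is at most (1/(2γ))^n for γ ∈ (1/2, 1); consequently, for any γ ∈ (1/2, 1) and any δ ∈ (0,1), if M < δ (2γ)^n then the probability that a uniformly random x' fails to be γ-separated from at least one of M fixed points is less than δ. -/
open MeasureTheory Metric
open scoped RealInnerProductSpace

/-- For `x'` uniform on the unit ball and a fixed `v ∈ B_n`, the probability that
`⟪x', v⟫ ≥ γ‖x'‖²` is at most `(1/(2γ))^n`; consequently, if `M < δ(2γ)^n` then a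
uniformly random `x'` fails to be `γ`-separated from at least one of `M` fixed points
with probability less than `δ`. -/
theorem stmt_16 (n : ℕ) (γ : ℝ) (hγ1 : 1 / 2 < γ) (hγ2 : γ < 1) :
    (∀ v ∈ closedBall (0 : EuclideanSpace ℝ (Fin n)) 1,
      ((volume (closedBall (0 : EuclideanSpace ℝ (Fin n)) 1))⁻¹ •
          volume.restrict (closedBall (0 : EuclideanSpace ℝ (Fin n)) 1))
        {x' : EuclideanSpace ℝ (Fin n) | γ * ‖x'‖ ^ 2 ≤ ⟪x', v⟫}
        ≤ ENNReal.ofReal ((1 / (2 * γ)) ^ n)) ∧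
    (∀ (M : ℕ) (δ : ℝ), 0 < δ → δ < 1 → (M : ℝ) < δ * (2 * γ) ^ n →
      ∀ v : Fin M → EuclideanSpace ℝ (Fin n),
        (∀ i, v i ∈ closedBall (0 : EuclideanSpace ℝ (Fin n)) 1) →
        ((volume (closedBall (0 : EuclideanSpace ℝ (Fin n)) 1))⁻¹ •
            volume.restrict (closedBall (0 : EuclideanSpace ℝ (Fin n)) 1))
          {x' : EuclideanSpace ℝ (Fin n) | ∃ i, γ * ‖x'‖ ^ 2 ≤ ⟪x', v i⟫}
          < ENNReal.ofReal δ) := by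
  have hγ0 : (0 : ℝ) < γ := lt_trans (by norm_num) hγ1
  set c : ℝ := 1 / (2 * γ) with hc_def
  have hc : 0 < c := by positivity
  set B := closedBall (0 : EuclideanSpace ℝ (Fin n)) 1 with hB
  set K := volume B with hK
  set μ := K⁻¹ • volume.restrict B with hμ
  have hK0 : K ≠ 0 := (measure_closedBall_pos volume 0 one_pos).ne'
  have hKt : K ≠ ⊤ := measure_closedBall_lt_top.ne
  have key : ∀ v ∈ closedBall (0 : EuclideanSpace ℝ (Fin n)) 1,
      μ {x' : EuclideanSpace ℝ (Fin n) | γ * ‖x'‖ ^ 2 ≤ ⟪x', v⟫}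
        ≤ ENNReal.ofReal (c ^ n) := by
    intro v hv
    have hvnorm : ‖v‖ ≤ 1 := by simpa [mem_closedBall, dist_eq_norm] using hv
    have hsub : {x' : EuclideanSpace ℝ (Fin n) | γ * ‖x'‖ ^ 2 ≤ ⟪x', v⟫}
        ⊆ closedBall (c • v) c := by
      intro x hx
      simp only [Set.mem_setOf_eq] at hx
      rw [mem_closedBall, dist_eq_norm]
      have hsq : ‖x - c • v‖ ^ 2 ≤ c ^ 2 := by
        rw [norm_sub_sq_real, real_inner_smul_right, norm_smul, Real.norm_eq_abs,
          abs_of_pos hc]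
        have h2cγ : 2 * c * γ = 1 := by
          rw [hc_def]; field_simp
        nlinarith [mul_le_mul_of_nonneg_left hx (by positivity : (0:ℝ) ≤ 2 * c),
          mul_le_mul hvnorm hvnorm (norm_nonneg v) zero_le_one, sq_nonneg c, hc.le]
      exact (pow_le_pow_iff_left₀ (norm_nonneg _) hc.le two_ne_zero).mp hsq
    calc μ {x' : EuclideanSpace ℝ (Fin n) | γ * ‖x'‖ ^ 2 ≤ ⟪x', v⟫}
        ≤ μ (closedBall (c • v) c) := measure_mono hsub
      _ = K⁻¹ * (volume.restrict B (closedBall (c • v) c)) := by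
          simp [hμ, Measure.smul_apply, smul_eq_mul]
      _ ≤ K⁻¹ * volume (closedBall (c • v) c) := by
          gcongr
          exact Measure.restrict_le_self
      _ = K⁻¹ * (ENNReal.ofReal (c ^ n) * K) := by
          rw [Measure.addHaar_closedBall' _ _ hc.le]
          simp [hK, hB, finrank_euclideanSpace_fin]
      _ = ENNReal.ofReal (c ^ n) := by
          rw [← mul_assoc, mul_comm K⁻¹, mul_assoc, ENNReal.inv_mul_cancel hK0 hKt,
            mul_one]
  constructor
  · exact key
  · intro M δ hδ0 hδ1 hM v hvmem
    have hset : {x' : EuclideanSpace ℝ (Fin n) | ∃ i, γ * ‖x'‖ ^ 2 ≤ ⟪x', v i⟫}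
        = ⋃ i, {x' : EuclideanSpace ℝ (Fin n) | γ * ‖x'‖ ^ 2 ≤ ⟪x', v i⟫} := by
      ext x; simp
    rw [hset]
    have h1 : μ (⋃ i, {x' : EuclideanSpace ℝ (Fin n) | γ * ‖x'‖ ^ 2 ≤ ⟪x', v i⟫})
        ≤ ∑ i : Fin M, μ {x' : EuclideanSpace ℝ (Fin n) | γ * ‖x'‖ ^ 2 ≤ ⟪x', v i⟫} :=
      measure_iUnion_fintype_le _ _
    have h2 : ∑ i : Fin M, μ {x' : EuclideanSpace ℝ (Fin n) | γ * ‖x'‖ ^ 2 ≤ ⟪x', v i⟫}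
        ≤ ∑ _i : Fin M, ENNReal.ofReal (c ^ n) :=
      Finset.sum_le_sum fun i _ => key (v i) (hvmem i)
    have h3 : ∑ _i : Fin M, ENNReal.ofReal (c ^ n)
        = ENNReal.ofReal ((M : ℝ) * c ^ n) := by
      rw [Finset.sum_const, Finset.card_univ, Fintype.card_fin,
        ENNReal.ofReal_mul (by positivity : (0:ℝ) ≤ (M:ℝ))]
      simp [nsmul_eq_mul, ENNReal.ofReal_natCast]
    have h4 : (M : ℝ) * c ^ n < δ := by
      have hpow : (0 : ℝ) < (2 * γ) ^ n := by positivity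
      rw [hc_def, div_pow, one_pow, mul_one_div, div_lt_iff₀ hpow]
      exact hM
    calc μ (⋃ i, {x' : EuclideanSpace ℝ (Fin n) | γ * ‖x'‖ ^ 2 ≤ ⟪x', v i⟫})
        ≤ ENNReal.ofReal ((M : ℝ) * c ^ n) := le_trans h1 (h2.trans_eq h3)
      _ < ENNReal.ofReal δ := (ENNReal.ofReal_lt_ofReal_iff hδ0).mpr h4
end
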